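/- Let n and k be positive integers with 2k < n and let p be a prime. Then the symmetric group Sym(n) contains a quasi-semiregular element of order p in its action on the set of k-element subsets of {1,…,n} if and only if k < p and p divides n − k. -/

import Mathlib

open Equiv Finset

section helpers
set_option linter.unusedSectionVars false
variable {α : Type*} [DecidableEq α] [Fintype α]

lemma fix_pow (g : Perm α) {x : α} (h : g x = x) (a : ℕ) : (g ^ a) x = x := by
  induction a with
  | zero => simp
  | succ a ih => rw [pow_succ, Perm.mul_apply, h, ih]

lemma fix_zpow (g : Perm α) {x : α} (h : g x = x) (a : ℤ) : (g ^ a) x = x := by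
  cases a with
  | ofNat a => simpa using fix_pow g h a
  | negSucc a =>
      have h1 := fix_pow g h (a + 1)
      rw [zpow_negSucc]
      calc (g ^ (a + 1))⁻¹ x = (g ^ (a + 1))⁻¹ ((g ^ (a + 1)) x) := by rw [h1]
        _ = x := (g ^ (a + 1)).symm_apply_apply _

lemma closed_of_image {g : Perm α} {S : Finset α} (h : S.image g = S) {x : α} (hx : x ∈ S) :
    g x ∈ S := by
  rw [← h]
  exact Finset.mem_image_of_mem _ hx

lemma closed_pow {g : Perm α} {S : Finset α} (h : S.image g = S) (j : ℕ) {x : α} (hx : x ∈ S) :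
    (g ^ j) x ∈ S := by
  induction j with
  | zero => simpa
  | succ j ih => rw [pow_succ', Perm.mul_apply]; exact closed_of_image h ih

lemma closed_inv {g : Perm α} {S : Finset α} (h : S.image g = S) {x : α} (hx : x ∈ S) :
    g⁻¹ x ∈ S := by
  rw [← h] at hx
  obtain ⟨y, hy, rfl⟩ := Finset.mem_image.mp hx
  simpa using hy

lemma closed_pow_inv {g : Perm α} {S : Finset α} (h : S.image g = S) (j : ℕ) {x : α}
    (hx : x ∈ S) : ((g ^ j)⁻¹) x ∈ S := by
  induction j generalizing x with
  | zero => simpa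
  | succ j ih =>
      have h2 : (g ^ (j + 1))⁻¹ = (g ^ j)⁻¹ * g⁻¹ := by
        rw [pow_succ', mul_inv_rev]
      rw [h2, Perm.mul_apply]
      exact ih (closed_inv h hx)

lemma pow_fix_of_lt {p : ℕ} (hp : p.Prime) {g : Perm α} (hg : g ^ p = 1) {x : α} {d : ℕ}
    (hd : 0 < d) (hdp : d < p) (hfix : (g ^ d) x = x) : g x = x := by
  have hnd : ¬ p ∣ d := Nat.not_dvd_of_pos_of_lt hd hdp
  have hcop : Nat.Coprime d p := ((Nat.Prime.coprime_iff_not_dvd hp).mpr hnd).symm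
  obtain ⟨a, -, ha⟩ := Nat.exists_mul_mod_eq_one_of_coprime hcop hp.one_lt
  have h1 : d * a = p * (d * a / p) + 1 := by
    conv_lhs => rw [← Nat.div_add_mod (d * a) p]
    rw [ha]
  have h2 : g ^ (d * a) = g := by
    rw [h1, pow_add, pow_mul, hg, one_pow, one_mul, pow_one]
  calc g x = (g ^ (d * a)) x := by rw [h2]
    _ = ((g ^ d) ^ a) x := by rw [← pow_mul]
    _ = x := fix_pow _ hfix a

lemma fix_of_fix_pow_apply {g : Perm α} {x z : α} {j : ℕ} (h : (g ^ j) x = z) (hz : g z = z) :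
    g x = x := by
  subst h
  have hcomm : g * g ^ j = g ^ j * g := (Commute.pow_self g j).symm
  have h3 : (g ^ j) (g x) = (g ^ j) x := by
    have h4 := congrArg (fun σ : Perm α => σ x) hcomm
    simp only [Perm.mul_apply] at h4
    rw [← h4, hz]
  exact (g ^ j).injective h3

/-- the g-orbit of x, as indexed by `Fin p`, assuming `g ^ p = 1` -/
def orbF (g : Perm α) (p : ℕ) (x : α) : Finset α :=
  Finset.univ.image (fun j : Fin p => (g ^ (j : ℕ)) x)

lemma mem_orb_self {g : Perm α} {p : ℕ} (hp : 0 < p) (x : α) : x ∈ orbF g p x :=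
  Finset.mem_image.mpr ⟨⟨0, hp⟩, Finset.mem_univ _, by simp⟩

lemma orb_subset {g : Perm α} {p : ℕ} {S : Finset α} (h : S.image g = S) {x : α} (hx : x ∈ S) :
    orbF g p x ⊆ S := by
  intro y hy
  obtain ⟨j, _, rfl⟩ := Finset.mem_image.mp hy
  exact closed_pow h _ hx

lemma orb_card {p : ℕ} (hp : p.Prime) {g : Perm α} (hg : g ^ p = 1) {x : α} (hx : g x ≠ x) :
    (orbF g p x).card = p := by
  have key : ∀ i j : Fin p, (i : ℕ) < (j : ℕ) → (g ^ (i : ℕ)) x = (g ^ (j : ℕ)) x → False := by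
    intro i j hlt heq
    have hd : (g ^ ((j : ℕ) - (i : ℕ))) ((g ^ (i : ℕ)) x) = (g ^ (i : ℕ)) x := by
      rw [← Perm.mul_apply, ← pow_add, Nat.sub_add_cancel hlt.le, ← heq]
    have hjp := j.isLt
    have hz := pow_fix_of_lt hp hg (by omega) (by omega : (j : ℕ) - (i : ℕ) < p) hd
    exact hx (fix_of_fix_pow_apply rfl hz)
  have hinj : Function.Injective (fun j : Fin p => (g ^ (j : ℕ)) x) := by
    intro i j hij
    simp only at hij
    rcases lt_trichotomy (i : ℕ) (j : ℕ) with h | h | h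
    · exact absurd hij (fun hh => key i j h hh)
    · exact Fin.ext h
    · exact absurd hij.symm (fun hh => key j i h hh)
  rw [orbF, Finset.card_image_of_injective _ hinj, Finset.card_univ, Fintype.card_fin]

lemma orb_inv {p : ℕ} (hp : 0 < p) {g : Perm α} (hg : g ^ p = 1) (x : α) :
    (orbF g p x).image g = orbF g p x := by
  have hsub : (orbF g p x).image g ⊆ orbF g p x := by
    intro y hy
    obtain ⟨z, hz, rfl⟩ := Finset.mem_image.mp hy
    obtain ⟨j, _, rfl⟩ := Finset.mem_image.mp hz
    have : g ((g ^ (j : ℕ)) x) = (g ^ ((j : ℕ) + 1)) x := by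
      rw [pow_succ', Perm.mul_apply]
    rw [this]
    by_cases hc : (j : ℕ) + 1 < p
    · exact Finset.mem_image.mpr ⟨⟨(j : ℕ) + 1, hc⟩, Finset.mem_univ _, rfl⟩
    · have hj := j.isLt
      have hcc : (j : ℕ) + 1 = p := by omega
      rw [hcc, hg]
      exact mem_orb_self hp x
  refine Finset.eq_of_subset_of_card_le hsub ?_
  rw [Finset.card_image_of_injective _ g.injective]

/-- fixed-point free invariant sets have cardinality divisible by p -/
lemma dvd_card_of_moved {p : ℕ} (hp : p.Prime) {g : Perm α} (hg : g ^ p = 1) :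
    ∀ N (S : Finset α), S.card ≤ N → S.image g = S → (∀ x ∈ S, g x ≠ x) → p ∣ S.card := by
  intro N
  induction N with
  | zero => intro S hS _ _; interval_cases h : S.card; simp
  | succ N ih =>
      intro S hS hinv hmov
      rcases S.eq_empty_or_nonempty with rfl | ⟨x, hx⟩
      · simp
      · have hO : orbF g p x ⊆ S := orb_subset hinv hx
        have hOcard : (orbF g p x).card = p := orb_card hp hg (hmov x hx)
        have hpS : p ≤ S.card := hOcard ▸ Finset.card_le_card hO
        have hS' : (S \ orbF g p x).card = S.card - p := by
          rw [Finset.card_sdiff_of_subset hO, hOcard]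
        have hinv' : (S \ orbF g p x).image g = S \ orbF g p x := by
          rw [Finset.image_sdiff _ _ g.injective, hinv, orb_inv hp.pos hg]
        have hp2 := hp.two_le
        have hdvd := ih (S \ orbF g p x) (by omega) hinv'
          (fun y hy => hmov y (Finset.mem_sdiff.mp hy).1)
        rw [hS'] at hdvd
        obtain ⟨c, hc⟩ := hdvd
        exact ⟨c + 1, by rw [mul_add, mul_one, ← hc]; omega⟩

end helpers

section more
set_option linter.unusedSectionVars false
variable {α : Type*} [DecidableEq α] [Fintype α]

lemma small_fix {p : ℕ} (hp : p.Prime) {g : Perm α} (hg : g ^ p = 1) {B : Finset α}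
    (hB : B.image g = B) (hcard : B.card < p) {x : α} (hx : x ∈ B) : g x = x := by
  by_contra hne
  have h1 : orbF g p x ⊆ B := orb_subset hB hx
  have h2 : p ≤ B.card := orb_card hp hg hne ▸ Finset.card_le_card h1
  omega

lemma image_of_pointwise_fixed {g : Perm α} {T : Finset α} (h : ∀ x ∈ T, g x = x) :
    T.image g = T := by
  rw [Finset.image_congr (g := id) (fun x hx => h x hx), Finset.image_id]

lemma permCongr_pow {β γ : Type*} (e : β ≃ γ) (σ : Perm β) (m : ℕ) :
    (e.permCongr σ) ^ m = e.permCongr (σ ^ m) := by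
  induction m with
  | zero => ext x; simp
  | succ m ih => ext x; simp [pow_succ, Perm.mul_apply, ih]

end more
section thm
open Equiv Finset Sum

theorem stmt13 {n k : ℕ} (hk : 0 < k) (hkn : 2 * k < n) {p : ℕ} (hp : p.Prime) :
    (∃ g : Equiv.Perm (Fin n), orderOf g = p ∧
      ∃ A : Finset (Fin n), A.card = k ∧
        (∀ B : Finset (Fin n), B.card = k → (B.image ⇑g = B ↔ B = A)) ∧
        (∀ (m : ℤ) (B : Finset (Fin n)), B.card = k → B ≠ A → B.image ⇑(g ^ m) = B →
          ∀ C : Finset (Fin n), C.card = k → C.image ⇑(g ^ m) = C)) ↔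
      (k < p ∧ p ∣ n - k) := by
  haveI : Fact p.Prime := ⟨hp⟩
  haveI : NeZero p := ⟨hp.ne_zero⟩
  constructor
  · rintro ⟨g, horder, A, hAcard, hiff, -⟩
    have hgp : g ^ p = 1 := by rw [← horder]; exact pow_orderOf_eq_one g
    have hg1 : g ≠ 1 := by
      intro h; rw [h, orderOf_one] at horder; exact hp.ne_one horder.symm
    have hAinv : A.image ⇑g = A := (hiff A hAcard).mpr rfl
    set F : Finset (Fin n) := Finset.univ.filter (fun x => g x = x) with hFdef
    have hmemF : ∀ x, x ∈ F ↔ g x = x := by intro x; simp [hFdef]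
    have hfixsub : ∀ T : Finset (Fin n), T ⊆ F → T.image ⇑g = T := fun T hT =>
      image_of_pointwise_fixed (fun x hx => (hmemF x).mp (hT hx))
    -- Step 1 : F.card ≤ k
    have hFk : F.card ≤ k := by
      by_contra h
      push_neg at h
      obtain ⟨S, hSsub, hScard⟩ := Finset.exists_subset_card_eq
        (show k + 1 ≤ F.card from h)
      obtain ⟨x, hx, y, hy, hxy⟩ := Finset.one_lt_card.mp (by omega : 1 < S.card)
      have hex : (S.erase x).card = k := by rw [Finset.card_erase_of_mem hx, hScard]; omega
      have hey : (S.erase y).card = k := by rw [Finset.card_erase_of_mem hy, hScard]; omega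
      have h1 : S.erase x = A := (hiff _ hex).mp
        (hfixsub _ ((Finset.erase_subset _ _).trans hSsub))
      have h2 : S.erase y = A := (hiff _ hey).mp
        (hfixsub _ ((Finset.erase_subset _ _).trans hSsub))
      have h3 : y ∈ S.erase x := Finset.mem_erase.mpr ⟨fun hh => hxy hh.symm, hy⟩
      rw [h1, ← h2] at h3
      exact Finset.notMem_erase y S h3
    -- Step 2 : all points of A are fixed
    have hAfix : ∀ x ∈ A, g x = x := by
      by_contra h
      push_neg at h
      obtain ⟨x, hxA, hgx⟩ := h
      have hOsub : orbF g p x ⊆ A := orb_subset hAinv hxA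
      have hOcard : (orbF g p x).card = p := orb_card hp hgp hgx
      have hpk : p ≤ k := by
        rw [← hAcard]; exact hOcard ▸ Finset.card_le_card hOsub
      have hAOcard : (A \ orbF g p x).card = k - p := by
        rw [Finset.card_sdiff_of_subset hOsub, hAcard, hOcard]
      have hAOinv : (A \ orbF g p x).image ⇑g = A \ orbF g p x := by
        rw [Finset.image_sdiff _ _ g.injective, hAinv, orb_inv hp.pos hgp]
      by_cases hy : ∃ y, g y ≠ y ∧ y ∉ A
      · obtain ⟨y, hgy, hyA⟩ := hy
        have hO'card : (orbF g p y).card = p := orb_card hp hgp hgy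
        have hO'inv : (orbF g p y).image ⇑g = orbF g p y := orb_inv hp.pos hgp y
        have hdisj : Disjoint (A \ orbF g p x) (orbF g p y) := by
          rw [Finset.disjoint_right]
          intro z hz hz'
          obtain ⟨j, -, rfl⟩ := Finset.mem_image.mp hz
          have h4 : ((g ^ (j : ℕ))⁻¹) ((g ^ (j : ℕ)) y) ∈ A :=
            closed_pow_inv hAinv _ (Finset.mem_sdiff.mp hz').1
          rw [show ((g ^ (j : ℕ))⁻¹) ((g ^ (j : ℕ)) y) = y from (g ^ (j : ℕ)).symm_apply_apply y] at h4
          exact hyA h4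
        have hBcard : ((A \ orbF g p x) ∪ orbF g p y).card = k := by
          rw [Finset.card_union_of_disjoint hdisj, hAOcard, hO'card]; omega
        have hBinv : ((A \ orbF g p x) ∪ orbF g p y).image ⇑g
            = (A \ orbF g p x) ∪ orbF g p y := by
          rw [Finset.image_union, hAOinv, hO'inv]
        have hBA := (hiff _ hBcard).mp hBinv
        have hyB : y ∈ (A \ orbF g p x) ∪ orbF g p y :=
          Finset.mem_union_right _ (mem_orb_self hp.pos y)
        rw [hBA] at hyB
        exact hyA hyB
      · push_neg at hy
        have hsubF : Finset.univ \ A ⊆ F := by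
          intro z hz
          rw [hmemF]
          by_contra hgz
          exact (Finset.mem_sdiff.mp hz).2 (hy z hgz)
        have hcompl : (Finset.univ \ A).card = n - k := by
          rw [Finset.card_sdiff_of_subset (Finset.subset_univ A), Finset.card_univ,
            Fintype.card_fin, hAcard]
        obtain ⟨S, hSsub, hScard⟩ := Finset.exists_subset_card_eq
          (show p ≤ (Finset.univ \ A).card by omega)
        have hSinv : S.image ⇑g = S := hfixsub S (hSsub.trans hsubF)
        have hdisj : Disjoint (A \ orbF g p x) S := by
          rw [Finset.disjoint_right]
          intro z hzS hzA
          exact (Finset.mem_sdiff.mp (hSsub hzS)).2 (Finset.mem_sdiff.mp hzA).1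
        have hBcard : ((A \ orbF g p x) ∪ S).card = k := by
          rw [Finset.card_union_of_disjoint hdisj, hAOcard, hScard]; omega
        have hBinv : ((A \ orbF g p x) ∪ S).image ⇑g = (A \ orbF g p x) ∪ S := by
          rw [Finset.image_union, hAOinv, hSinv]
        have hBA := (hiff _ hBcard).mp hBinv
        obtain ⟨s, hs⟩ := Finset.card_pos.mp (by rw [hScard]; exact hp.pos)
        have hsB : s ∈ (A \ orbF g p x) ∪ S := Finset.mem_union_right _ hs
        rw [hBA] at hsB
        exact (Finset.mem_sdiff.mp (hSsub hs)).2 hsB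
    have hAF : A = F := Finset.eq_of_subset_of_card_le
      (fun x hx => (hmemF x).mpr (hAfix x hx)) (by rw [hAcard]; exact hFk)
    have hFcard : F.card = k := by rw [← hAF, hAcard]
    -- Step 3 : k < p
    obtain ⟨y, hgy⟩ : ∃ y, g y ≠ y := by
      by_contra h; push_neg at h; exact hg1 (Equiv.ext h)
    have hyA : y ∉ A := fun h => hgy (hAfix y h)
    have hkp : k < p := by
      by_contra h
      push_neg at h
      obtain ⟨A', hA'sub, hA'card⟩ := Finset.exists_subset_card_eq
        (show k - p ≤ A.card by rw [hAcard]; omega)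
      have hO'card := orb_card hp hgp hgy
      have hO'inv := orb_inv hp.pos hgp y
      have hdisj : Disjoint A' (orbF g p y) := by
        rw [Finset.disjoint_left]
        intro a ha ha'
        obtain ⟨j, -, hj⟩ := Finset.mem_image.mp ha'
        exact hgy (fix_of_fix_pow_apply hj (hAfix _ (hA'sub ha)))
      have hBcard : (A' ∪ orbF g p y).card = k := by
        rw [Finset.card_union_of_disjoint hdisj, hA'card, hO'card]; omega
      have hBinv : (A' ∪ orbF g p y).image ⇑g = A' ∪ orbF g p y := by
        rw [Finset.image_union, hfixsub A' (hA'sub.trans (hAF ▸ Finset.Subset.refl A)),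
          hO'inv]
      have hBA := (hiff _ hBcard).mp hBinv
      have hyB : y ∈ A' ∪ orbF g p y := Finset.mem_union_right _ (mem_orb_self hp.pos y)
      rw [hBA] at hyB
      exact hyA hyB
    -- Step 4 : p ∣ n - k
    have hMinv : (Finset.univ \ F).image ⇑g = Finset.univ \ F := by
      rw [Finset.image_sdiff _ _ g.injective, Finset.image_univ_equiv g,
        hfixsub F (Finset.Subset.refl F)]
    have hMcard : (Finset.univ \ F).card = n - k := by
      rw [Finset.card_sdiff_of_subset (Finset.subset_univ F), Finset.card_univ,
        Fintype.card_fin, hFcard]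
    have hdvd := dvd_card_of_moved hp hgp (Finset.univ \ F).card (Finset.univ \ F)
      le_rfl hMinv (fun x hx => by
        have h5 := (Finset.mem_sdiff.mp hx).2
        rwa [hmemF] at h5)
    exact ⟨hkp, hMcard ▸ hdvd⟩
  · rintro ⟨hkp, hdvd⟩
    set c := (n - k) / p with hcdef
    have hc : c * p = n - k := Nat.div_mul_cancel hdvd
    have hcpos : 0 < c := by
      rcases Nat.eq_zero_or_pos c with h | h
      · rw [h] at hc; omega
      · exact h
    have hcard : Fintype.card (Fin k ⊕ Fin c × ZMod p) = n := by
      simp [ZMod.card]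
      omega
    obtain e := Fintype.equivFinOfCardEq hcard
    set σ : Perm (Fin k ⊕ Fin c × ZMod p) :=
      Equiv.sumCongr (Equiv.refl _) (Equiv.prodCongr (Equiv.refl _) (Equiv.addRight (1 : ZMod p)))
      with hσdef
    have hσinl : ∀ i, σ (inl i) = inl i := fun i => rfl
    have hσinr : ∀ i r, σ (inr (i, r)) = inr (i, r + 1) := fun i r => rfl
    set g : Perm (Fin n) := e.permCongr σ with hgdef
    have hσp : σ ^ p = 1 := by
      have hpow : ∀ (m : ℕ) (i r), (σ ^ m) (inr (i, r)) = inr (i, r + (m : ZMod p)) := by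
        intro m
        induction m with
        | zero => intro i r; simp
        | succ m ih =>
            intro i r
            rw [pow_succ', Perm.mul_apply, ih, hσinr]
            push_cast
            ring_nf
      ext x
      rcases x with i | ⟨i, r⟩
      · simp [fix_pow σ (hσinl i) p]
      · simp [hpow p i r, ZMod.natCast_self]
    have hgp : g ^ p = 1 := by
      rw [hgdef, permCongr_pow, hσp]
      ext x; simp
    -- fixed point characterization
    have hfix : ∀ x : Fin n, g x = x ↔ ∃ i, e (inl i) = x := by
      intro x
      constructor
      · intro h
        rcases he : e.symm x with i | ⟨i, r⟩
        · exact ⟨i, by rw [← he, e.apply_symm_apply]⟩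
        · exfalso
          have h2 : g x = e (σ (e.symm x)) := rfl
          rw [he, hσinr] at h2
          rw [h2] at h
          have h3 : e (inr (i, r + 1)) = e (inr (i, r)) := by
            rw [h]
            conv_lhs => rw [← e.apply_symm_apply x, he]
          have h4 := e.injective h3
          have h5 : r + 1 = r := congrArg (fun z => (Sum.elim (fun _ => r) Prod.snd z)) h4
          simp at h5
      · rintro ⟨i, rfl⟩
        show e (σ (e.symm (e (inl i)))) = e (inl i)
        rw [e.symm_apply_apply, hσinl]
    -- the fixed set A
    set A : Finset (Fin n) := Finset.univ.image (fun i : Fin k => e (inl i)) with hAdef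
    have hinjA : Function.Injective (fun i : Fin k => e (inl i)) :=
      fun a b hab => Sum.inl_injective (e.injective hab)
    have hAcard : A.card = k := by
      rw [hAdef, Finset.card_image_of_injective _ hinjA, Finset.card_univ, Fintype.card_fin]
    have hmemA : ∀ x : Fin n, x ∈ A ↔ g x = x := by
      intro x
      rw [hfix x, hAdef, Finset.mem_image]
      simp
    have hg1 : g ≠ 1 := by
      intro h
      have hx := (hfix (e (inr (⟨0, hcpos⟩, 0)))).mp (by rw [h]; rfl)
      obtain ⟨i, hi⟩ := hx
      exact Sum.inl_ne_inr (e.injective hi)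
    have horder : orderOf g = p := orderOf_eq_prime hgp hg1
    have hsubA_eq : ∀ B : Finset (Fin n), B.card = k → (∀ x ∈ B, g x = x) → B = A := by
      intro B hB h
      exact Finset.eq_of_subset_of_card_le (fun x hx => (hmemA x).mpr (h x hx))
        (by rw [hAcard, hB])
    refine ⟨g, horder, A, hAcard, ?_, ?_⟩
    · intro B hB
      constructor
      · intro hBinv
        exact hsubA_eq B hB (fun x hx => small_fix hp hgp hBinv (by omega) hx)
      · rintro rfl
        refine Finset.eq_of_subset_of_card_le ?_
          (by rw [Finset.card_image_of_injective _ g.injective])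
        intro y hy
        obtain ⟨x, hx, rfl⟩ := Finset.mem_image.mp hy
        rw [(hmemA x).mp hx]
        exact hx
    · intro m B hB hBA hBinv C hC
      by_cases hdm : (p : ℤ) ∣ m
      · have h1 : g ^ m = 1 := orderOf_dvd_iff_zpow_eq_one.mp (by rw [horder]; exact hdm)
        rw [h1]
        simp
      · exfalso
        apply hBA
        have hgm : (g ^ m) ^ p = 1 := by
          have h2 : (g ^ m) ^ (p : ℕ) = g ^ (m * (p : ℤ)) := by
            rw [← zpow_natCast (g ^ m) p, ← zpow_mul]
          rw [h2, mul_comm, zpow_mul, zpow_natCast, hgp, one_zpow]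
        have hu : ((m : ZMod p)) ≠ 0 := by
          rwa [Ne, ZMod.intCast_zmod_eq_zero_iff_dvd]
        set a : ℤ := (((m : ZMod p)⁻¹).val : ℤ) with hadef
        have hcast : ((a : ℤ) : ZMod p) = (m : ZMod p)⁻¹ := by
          rw [hadef, Int.cast_natCast, ZMod.natCast_val, ZMod.cast_id]
        have ha : (p : ℤ) ∣ a * m - 1 := by
          have h3 : ((a * m - 1 : ℤ) : ZMod p) = 0 := by
            push_cast
            rw [hcast, inv_mul_cancel₀ hu, sub_self]
          exact (ZMod.intCast_zmod_eq_zero_iff_dvd _ p).mp h3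
        have hg_eq : (g ^ m) ^ a = g := by
          rw [← zpow_mul, mul_comm]
          have h4 : g ^ (a * m) = g ^ (a * m - 1) * g ^ (1 : ℤ) := by
            rw [← zpow_add]; ring_nf
          have h5 : g ^ (a * m - 1) = 1 :=
            orderOf_dvd_iff_zpow_eq_one.mp (by rw [horder]; exact ha)
          rw [h4, h5, one_mul, zpow_one]
        refine hsubA_eq B hB (fun x hx => ?_)
        have h6 : (g ^ m) x = x := small_fix hp hgm hBinv (by omega) hx
        have h7 := fix_zpow (g ^ m) h6 a
        rwa [hg_eq] at h7
end thm
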